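/- Let L : c_1 x_1 + ... + c_k x_k = 0 be a homogeneous linear equation with k ≥ 3, nonzero integer coefficients, and Σ_{i=1}^k c_i = 0. For every ε > 0 there exists δ = δ(ε, L) > 0 such that for every prime p and every set A ⊆ F_p with |A| ≥ εp, there are at least δ · p^{k−1} tuples (x_1, ..., x_k) ∈ A^k (repetitions allowed) with c_1 x_1 + ... + c_k x_k = 0 in F_p. -/

import Mathlib

open Finset SimpleGraph

namespace St9

variable {F : Type*} [CommRing F] [Fintype F] [DecidableEq F]

def rel (α β γ : F) (A S : Finset F) : F ⊕ F ⊕ F → F ⊕ F ⊕ F → Prop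
  | .inl x, .inr (.inl y) => ∃ u ∈ A, y = x + α * u
  | .inr (.inl y), .inr (.inr z) => ∃ v ∈ A, z = y + β * v
  | .inl x, .inr (.inr z) => ∃ w ∈ S, x = z + γ * w
  | _, _ => False

instance relDec (α β γ : F) (A S : Finset F) : DecidableRel (rel α β γ A S)
  | .inl _, .inl _ => .isFalse fun h => h
  | .inl x, .inr (.inl y) => inferInstanceAs (Decidable (∃ u ∈ A, y = x + α * u))
  | .inl x, .inr (.inr z) => inferInstanceAs (Decidable (∃ w ∈ S, x = z + γ * w))
  | .inr (.inl _), .inl _ => .isFalse fun h => h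
  | .inr (.inl _), .inr (.inl _) => .isFalse fun h => h
  | .inr (.inl y), .inr (.inr z) => inferInstanceAs (Decidable (∃ v ∈ A, z = y + β * v))
  | .inr (.inr _), .inl _ => .isFalse fun h => h
  | .inr (.inr _), .inr (.inl _) => .isFalse fun h => h
  | .inr (.inr _), .inr (.inr _) => .isFalse fun h => h

def graph (α β γ : F) (A S : Finset F) : SimpleGraph (F ⊕ F ⊕ F) :=
  SimpleGraph.fromRel (rel α β γ A S)

instance graphDec (α β γ : F) (A S : Finset F) : DecidableRel (graph α β γ A S).Adj :=
  fun a b => decidable_of_iff _ (SimpleGraph.fromRel_adj (rel α β γ A S) a b).symm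

def T (α β γ : F) (A S : Finset F) : Finset (F × F × F) :=
  univ.filter fun t => t.1 ∈ A ∧ t.2.1 ∈ A ∧ t.2.2 ∈ S ∧ α * t.1 + β * t.2.1 + γ * t.2.2 = 0

def tri (α β : F) (q : F × (F × F × F)) : Finset (F ⊕ F ⊕ F) :=
  {Sum.inl q.1, Sum.inr (Sum.inl (q.1 + α * q.2.1)),
    Sum.inr (Sum.inr (q.1 + α * q.2.1 + β * q.2.2.1))}

variable {α β γ : F} {A S : Finset F}

lemma surj_aux {x y z : F} (h1 : ∃ u ∈ A, y = x + α * u) (h2 : ∃ v ∈ A, z = y + β * v)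
    (h3 : ∃ w ∈ S, x = z + γ * w) :
    ∃ q ∈ (univ ×ˢ T α β γ A S : Finset (F × (F × F × F))), tri α β q =
      ({Sum.inl x, Sum.inr (Sum.inl y), Sum.inr (Sum.inr z)} : Finset (F ⊕ F ⊕ F)) := by
  obtain ⟨u, hu, rfl⟩ := h1
  obtain ⟨v, hv, rfl⟩ := h2
  obtain ⟨w, hw, hw'⟩ := h3
  refine ⟨(x, (u, v, w)), ?_, rfl⟩
  simp only [mem_product, mem_univ, true_and, T, mem_filter]
  exact ⟨hu, hv, hw, by linear_combination -hw'⟩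

lemma card_clique_le :
    #((graph α β γ A S).cliqueFinset 3) ≤ #(univ ×ˢ T α β γ A S : Finset (F × (F × F × F))) := by
  apply Finset.card_le_card_of_surjOn (tri α β)
  intro s hs
  rw [Finset.mem_coe, mem_cliqueFinset_iff, is3Clique_iff] at hs
  obtain ⟨v₁, v₂, v₃, h12, h13, h23, rfl⟩ := hs
  simp only [graph, fromRel_adj, rel] at h12 h13 h23
  rw [Set.mem_image]
  rcases v₁ with x | y | z <;> rcases v₂ with x' | y' | z' <;> rcases v₃ with x'' | y'' | z'' <;>
      simp only [or_false, false_or, or_self, and_false, false_and, and_true, ne_eq,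
        Sum.inr.injEq, reduceCtorEq, not_false_eq_true, true_and] at h12 h13 h23
  · obtain ⟨q, hq, hq'⟩ := surj_aux h12 h23 h13
    exact ⟨q, hq, by rw [hq']⟩
  · obtain ⟨q, hq, hq'⟩ := surj_aux h13 h23 h12
    exact ⟨q, hq, by rw [hq']; ext e; simp only [mem_insert, mem_singleton]; tauto⟩
  · obtain ⟨q, hq, hq'⟩ := surj_aux h12 h13 h23
    exact ⟨q, hq, by rw [hq']; ext e; simp only [mem_insert, mem_singleton]; tauto⟩
  · obtain ⟨q, hq, hq'⟩ := surj_aux h13 h12 h23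
    exact ⟨q, hq, by rw [hq']; ext e; simp only [mem_insert, mem_singleton]; tauto⟩
  · obtain ⟨q, hq, hq'⟩ := surj_aux h23 h13 h12
    exact ⟨q, hq, by rw [hq']; ext e; simp only [mem_insert, mem_singleton]; tauto⟩
  · obtain ⟨q, hq, hq'⟩ := surj_aux h23 h12 h13
    exact ⟨q, hq, by rw [hq']; ext e; simp only [mem_insert, mem_singleton]; tauto⟩


section FieldPart
variable {F : Type*} [Field F] [Fintype F] [DecidableEq F]
variable {α β γ : F} {A S : Finset F}

def triv (α β : F) (q : F × F) : Finset (F ⊕ F ⊕ F) := tri α β (q.1, (q.2, q.2, q.2))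


lemma mem_triv {e : F ⊕ F ⊕ F} {q : F × F} :
    e ∈ triv α β q ↔ e = Sum.inl q.1 ∨ e = Sum.inr (Sum.inl (q.1 + α * q.2)) ∨
      e = Sum.inr (Sum.inr (q.1 + α * q.2 + β * q.2)) := by
  simp [triv, tri]

lemma joint (hα : α ≠ 0) (hβ : β ≠ 0) (hγ : γ ≠ 0) (hsum : α + β + γ = 0)
    {e : F ⊕ F ⊕ F} {q q' : F × F} (hne : q ≠ q')
    (h1 : e ∈ triv α β q) (h2 : e ∈ triv α β q') :
    (e = Sum.inl q.1 ∧ q.1 = q'.1) ∨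
    (e = Sum.inr (Sum.inl (q.1 + α * q.2)) ∧ q.1 + α * q.2 = q'.1 + α * q'.2) ∨
    (e = Sum.inr (Sum.inr (q.1 + α * q.2 + β * q.2)) ∧
      q.1 + α * q.2 + β * q.2 = q'.1 + α * q'.2 + β * q'.2) := by
  rw [mem_triv] at h1 h2
  rcases h1 with h | h | h <;> subst h <;>
    simp only [Sum.inl.injEq, Sum.inr.injEq, reduceCtorEq, false_or, or_false] at h2 <;> tauto

lemma eqs_contradiction (hα : α ≠ 0) (hβ : β ≠ 0) (hγ : γ ≠ 0) (hsum : α + β + γ = 0)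
    {q q' : F × F} (hne : q ≠ q')
    (h : (q.1 = q'.1 ∧ q.1 + α * q.2 = q'.1 + α * q'.2) ∨
         (q.1 = q'.1 ∧ q.1 + α * q.2 + β * q.2 = q'.1 + α * q'.2 + β * q'.2) ∨
         (q.1 + α * q.2 = q'.1 + α * q'.2 ∧
           q.1 + α * q.2 + β * q.2 = q'.1 + α * q'.2 + β * q'.2)) : False := by
  have hαβ : α + β ≠ 0 := fun h' => hγ (by linear_combination hsum - h')
  have hs : q.2 = q'.2 := by
    rcases h with ⟨h1, h2⟩ | ⟨h1, h2⟩ | ⟨h1, h2⟩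
    · exact mul_left_cancel₀ hα (by linear_combination h2 - h1)
    · exact mul_left_cancel₀ hαβ (by linear_combination h2 - h1)
    · exact mul_left_cancel₀ hβ (by linear_combination h2 - h1)
  have hx : q.1 = q'.1 := by
    rcases h with ⟨h1, h2⟩ | ⟨h1, h2⟩ | ⟨h1, h2⟩
    · exact h1
    · exact h1
    · linear_combination h1 - α * hs
  exact hne (Prod.ext hx hs)

lemma triv_pairwise (hα : α ≠ 0) (hβ : β ≠ 0) (hγ : γ ≠ 0) (hsum : α + β + γ = 0) :
    ((((univ ×ˢ S).image (triv α β) : Finset (Finset (F ⊕ F ⊕ F)))) : Set (Finset (F ⊕ F ⊕ F))).Pairwise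
      fun x y => ((x : Set (F ⊕ F ⊕ F)) ∩ (y : Set (F ⊕ F ⊕ F))).Subsingleton := by
  intro a ha b hb hab
  rw [mem_coe, mem_image] at ha hb
  obtain ⟨q, hq, rfl⟩ := ha
  obtain ⟨q', hq', rfl⟩ := hb
  have hne : q ≠ q' := by rintro rfl; exact hab rfl
  intro e he e' he'
  rw [Set.mem_inter_iff, mem_coe, mem_coe] at he he'
  have j1 := joint hα hβ hγ hsum hne he.1 he.2
  have j2 := joint hα hβ hγ hsum hne he'.1 he'.2
  obtain ⟨d1 | d1 | d1, d2 | d2 | d2⟩ := And.intro j1 j2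
  · exact d1.1.trans d2.1.symm
  · exact absurd (Or.inl ⟨d1.2, d2.2⟩) (fun h => eqs_contradiction hα hβ hγ hsum hne h)
  · exact absurd (Or.inr (Or.inl ⟨d1.2, d2.2⟩)) (fun h => eqs_contradiction hα hβ hγ hsum hne h)
  · exact absurd (Or.inl ⟨d2.2, d1.2⟩) (fun h => eqs_contradiction hα hβ hγ hsum hne h)
  · exact d1.1.trans d2.1.symm
  · exact absurd (Or.inr (Or.inr ⟨d1.2, d2.2⟩)) (fun h => eqs_contradiction hα hβ hγ hsum hne h)
  · exact absurd (Or.inr (Or.inl ⟨d2.2, d1.2⟩)) (fun h => eqs_contradiction hα hβ hγ hsum hne h)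
  · exact absurd (Or.inr (Or.inr ⟨d2.2, d1.2⟩)) (fun h => eqs_contradiction hα hβ hγ hsum hne h)
  · exact d1.1.trans d2.1.symm

lemma triv_injOn (hα : α ≠ 0) :
    Set.InjOn (triv α β) ((univ ×ˢ S : Finset (F × F)) : Set (F × F)) := by
  intro q _ q' _ h
  have h0 : Sum.inl q.1 ∈ triv α β q' := h ▸ mem_triv.2 (Or.inl rfl)
  have h1 : Sum.inr (Sum.inl (q.1 + α * q.2)) ∈ triv α β q' := h ▸ mem_triv.2 (Or.inr (Or.inl rfl))
  rw [mem_triv] at h0 h1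
  simp only [Sum.inl.injEq, Sum.inr.injEq, reduceCtorEq, false_or, or_false] at h0 h1
  have hx : q.1 = q'.1 := h0
  have hs : q.2 = q'.2 := mul_left_cancel₀ hα (by linear_combination h1 - hx)
  exact Prod.ext hx hs

lemma card_triv_image (hα : α ≠ 0) :
    #((univ ×ˢ S).image (triv α β)) = Fintype.card F * #S := by
  rw [Finset.card_image_of_injOn (triv_injOn hα), card_product, card_univ]



lemma triv_mem (hSA : S ⊆ A) (hsum : α + β + γ = 0) {q : F × F} (hq : q.2 ∈ S) :
    triv α β q ∈ (graph α β γ A S).cliqueFinset 3 := by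
  rw [mem_cliqueFinset_iff]
  refine is3Clique_triple_iff.2 ⟨?_, ?_, ?_⟩ <;> rw [graph, SimpleGraph.fromRel_adj]
  · exact ⟨by simp, Or.inl ⟨q.2, hSA hq, rfl⟩⟩
  · exact ⟨by simp, Or.inl ⟨q.2, hq, by linear_combination (-q.2) * hsum⟩⟩
  · exact ⟨by simp, Or.inl ⟨q.2, hSA hq, rfl⟩⟩

lemma core3 {σ : ℝ} (hσ : 0 < σ) (hσ1 : σ ≤ 1) :
    ∃ δ : ℝ, 0 < δ ∧ ∀ (p : ℕ) [Fact p.Prime], ∀ α β γ : ZMod p, α ≠ 0 → β ≠ 0 → γ ≠ 0 →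
      α + β + γ = 0 → ∀ A S : Finset (ZMod p), S ⊆ A → σ * p ≤ #S →
      δ * (p : ℝ) ^ 2 ≤ #(T α β γ A S) := by
  have htrb : 0 < triangleRemovalBound (σ/9) :=
    triangleRemovalBound_pos (by positivity)
  refine ⟨27 * triangleRemovalBound (σ/9), by positivity, ?_⟩
  intro p hp α β γ hα hβ hγ hsum A S hSA hS
  have hp' := hp.out
  have hp0 : (0:ℝ) < p := by exact_mod_cast hp'.pos
  have hcardV : (Fintype.card (ZMod p ⊕ ZMod p ⊕ ZMod p)) = 3 * p := by
    simp [ZMod.card]; ring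
  have far : (graph α β γ A S).FarFromTriangleFree (σ/9) := by
    apply farFromTriangleFree_of_disjoint_triangles ((univ ×ˢ S).image (triv α β))
    · intro t ht
      rw [mem_image] at ht
      obtain ⟨q, hq, rfl⟩ := ht
      rw [mem_product] at hq
      exact triv_mem hSA hsum hq.2
    · exact triv_pairwise hα hβ hγ hsum
    · rw [card_triv_image hα, hcardV, ZMod.card]
      push_cast
      calc σ/9 * (3*(p:ℝ))^2 = (σ * p) * p := by ring
        _ ≤ (#S : ℝ) * p := mul_le_mul_of_nonneg_right hS hp0.le
        _ = (p : ℝ) * #S := by ring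
  have h1 := far.le_card_cliqueFinset
  have h2 : #((graph α β γ A S).cliqueFinset 3) ≤ p * #(T α β γ A S) := by
    refine card_clique_le.trans ?_
    rw [card_product, card_univ, ZMod.card]
  rw [hcardV] at h1
  have h3 : (p:ℝ) * (27 * triangleRemovalBound (σ/9) * (p:ℝ)^2) ≤ (p:ℝ) * #(T α β γ A S) := by
    calc (p:ℝ) * (27 * triangleRemovalBound (σ/9) * (p:ℝ)^2)
        = triangleRemovalBound (σ/9) * ((3*p : ℕ) : ℝ)^3 := by push_cast; ring
      _ ≤ (#((graph α β γ A S).cliqueFinset 3) : ℝ) := h1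
      _ ≤ ((p * #(T α β γ A S) : ℕ) : ℝ) := by exact_mod_cast h2
      _ = (p:ℝ) * #(T α β γ A S) := by push_cast; ring
  exact le_of_mul_le_mul_left h3 hp0

end FieldPart

section NumSol
variable {F : Type*} [Fintype F] [DecidableEq F] [AddCommGroup F]

def numSol {k : ℕ} (c : Fin k → ℤ) (A : Finset F) : ℕ :=
  #(univ.filter fun x : Fin k → F => (∀ i, x i ∈ A) ∧ ∑ i, c i • x i = 0)

lemma one_le_numSol {k : ℕ} {c : Fin k → ℤ} {A : Finset F} (hsum : ∑ i, c i = 0)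
    (hA : A.Nonempty) : 1 ≤ numSol c A := by
  obtain ⟨a, ha⟩ := hA
  refine Finset.card_pos.2 ⟨fun _ => a, ?_⟩
  rw [mem_filter]
  exact ⟨mem_univ _, fun i => ha, by rw [← Finset.sum_smul, hsum, zero_smul]⟩

lemma numSol_comp_perm {k : ℕ} (c : Fin k → ℤ) (π : Equiv.Perm (Fin k)) (A : Finset F) :
    numSol (c ∘ ⇑π) A = numSol c A := by
  unfold numSol
  refine Finset.card_nbij' (fun x => x ∘ ⇑π⁻¹) (fun x => x ∘ ⇑π) ?_ ?_ ?_ ?_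
  · intro x hx
    rw [mem_coe, mem_filter] at hx ⊢
    refine ⟨mem_univ _, fun i => hx.2.1 _, ?_⟩
    have := hx.2.2
    rw [← Equiv.sum_comp π (fun i => c i • (x ∘ ⇑π⁻¹) i)]
    simpa using this
  · intro x hx
    rw [mem_coe, mem_filter] at hx ⊢
    refine ⟨mem_univ _, fun i => hx.2.1 _, ?_⟩
    have := hx.2.2
    rw [← Equiv.sum_comp π (fun i => c i • x i)] at this
    simpa using this
  · intro x _; funext i; simp
  · intro x _; funext i; simp


lemma base3 (c : Fin 3 → ℤ) (hc : ∀ i, c i ≠ 0) (hsum : ∑ i, c i = 0) {ε : ℝ} (hε : 0 < ε) :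
    ∃ δ : ℝ, 0 < δ ∧ ∀ (p : ℕ) [Fact p.Prime], ∀ A : Finset (ZMod p),
      ε * p ≤ #A → δ * (p : ℝ) ^ 2 ≤ numSol c A := by
  obtain ⟨δ₂, hδ₂, H⟩ := core3 (σ := min ε 1) (lt_min hε one_pos) (min_le_right _ _)
  set B : ℕ := (c 0).natAbs + (c 1).natAbs + (c 2).natAbs with hB
  refine ⟨min δ₂ (((B : ℝ) + 1)⁻¹ ^ 2), by positivity, ?_⟩
  intro p hp A hA
  have hp0 : (0:ℝ) < p := by exact_mod_cast hp.out.pos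
  have hAne : A.Nonempty := by
    rw [← Finset.card_pos]
    have : (0:ℝ) < #A := lt_of_lt_of_le (by positivity) hA
    exact_mod_cast this
  by_cases hbig : B < p
  · have hcast : ∀ i : Fin 3, ((c i : ℤ) : ZMod p) ≠ 0 := by
      intro i h
      rw [ZMod.intCast_zmod_eq_zero_iff_dvd] at h
      have h2 : p ∣ (c i).natAbs := Int.natCast_dvd_natCast.1 (Int.dvd_natAbs.2 h)
      have h3 := Nat.le_of_dvd (Int.natAbs_pos.2 (hc i)) h2
      have h4 : (c i).natAbs ≤ B := by
        have h5 : i = 0 ∨ i = 1 ∨ i = 2 := by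
          rcases (by omega : (i : ℕ) = 0 ∨ (i : ℕ) = 1 ∨ (i : ℕ) = 2) with h' | h' | h' <;>
            [exact Or.inl (Fin.ext h'); exact Or.inr (Or.inl (Fin.ext h'));
              exact Or.inr (Or.inr (Fin.ext h'))]
        rcases h5 with rfl | rfl | rfl <;> omega
      omega
    have hsum' : ((c 0 : ℤ) : ZMod p) + ((c 1 : ℤ) : ZMod p) + ((c 2 : ℤ) : ZMod p) = 0 := by
      have h0 : ((∑ i, c i : ℤ) : ZMod p) = 0 := by rw [hsum]; simp
      rw [Fin.sum_univ_three] at h0; push_cast at h0; exact h0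
    have hT := H p ((c 0 : ℤ) : ZMod p) ((c 1 : ℤ) : ZMod p) ((c 2 : ℤ) : ZMod p)
      (hcast 0) (hcast 1) (hcast 2) hsum' A A Finset.Subset.rfl
      (le_trans (mul_le_mul_of_nonneg_right (min_le_left _ _) hp0.le) hA)
    have hinj : #(T ((c 0 : ℤ) : ZMod p) ((c 1 : ℤ) : ZMod p) ((c 2 : ℤ) : ZMod p) A A)
        ≤ numSol c A := by
      apply card_le_card_of_injOn (fun t => ![t.1, t.2.1, t.2.2])
      · intro t ht
        simp only [T, mem_coe, mem_filter, mem_univ, true_and] at ht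
        obtain ⟨h1, h2, h3, h4⟩ := ht
        rw [mem_coe]
        refine mem_filter.2 ⟨mem_univ _, ?_, ?_⟩
        · intro i; fin_cases i <;> simpa
        · simpa [Fin.sum_univ_three, zsmul_eq_mul] using h4
      · intro t _ t' _ h
        have h0 := congrFun h 0
        have h1 := congrFun h 1
        have h2 := congrFun h 2
        simp only [Matrix.cons_val_zero, Matrix.cons_val_one, Matrix.head_cons,
          Matrix.cons_val_two, Matrix.tail_cons] at h0 h1 h2
        exact Prod.ext h0 (Prod.ext h1 h2)
    calc min δ₂ (((B : ℝ) + 1)⁻¹ ^ 2) * (p:ℝ)^2 ≤ δ₂ * (p:ℝ)^2 :=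
          mul_le_mul_of_nonneg_right (min_le_left _ _) (by positivity)
      _ ≤ #(T ((c 0 : ℤ) : ZMod p) ((c 1 : ℤ) : ZMod p) ((c 2 : ℤ) : ZMod p) A A) := hT
      _ ≤ numSol c A := by exact_mod_cast hinj
  · push_neg at hbig
    have h1 : 1 ≤ numSol c A := one_le_numSol hsum hAne
    have hpB : (p:ℝ) ≤ B := by exact_mod_cast hbig
    calc min δ₂ (((B : ℝ) + 1)⁻¹ ^ 2) * (p:ℝ)^2 ≤ (((B : ℝ) + 1)⁻¹ ^ 2) * (p:ℝ)^2 :=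
          mul_le_mul_of_nonneg_right (min_le_right _ _) (by positivity)
      _ ≤ 1 := by
          have hB1 : (0:ℝ) < (B:ℝ) + 1 := by positivity
          rw [← mul_pow]
          have : ((B : ℝ) + 1)⁻¹ * (p:ℝ) ≤ 1 := by
            rw [inv_mul_le_iff₀ hB1]; linarith
          nlinarith [mul_nonneg (inv_nonneg.2 hB1.le) hp0.le]
      _ ≤ numSol c A := by exact_mod_cast h1

lemma step (n : ℕ)
    (IH : ∀ c : Fin (n+3) → ℤ, (∀ i, c i ≠ 0) → ∑ i, c i = 0 → ∀ ε : ℝ, 0 < ε →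
      ∃ δ : ℝ, 0 < δ ∧ ∀ (p : ℕ) [Fact p.Prime], ∀ A : Finset (ZMod p),
        ε * p ≤ #A → δ * (p : ℝ) ^ (n+2) ≤ numSol c A)
    (c : Fin (n+4) → ℤ) (hc : ∀ i, c i ≠ 0) (hsum : ∑ i, c i = 0) (ε : ℝ) (hε : 0 < ε) :
    ∃ δ : ℝ, 0 < δ ∧ ∀ (p : ℕ) [Fact p.Prime], ∀ A : Finset (ZMod p),
      ε * p ≤ #A → δ * (p : ℝ) ^ (n+3) ≤ numSol c A := by
  classical
  obtain ⟨i, j, hij, hd0⟩ : ∃ i j : Fin (n+4), i ≠ j ∧ c i + c j ≠ 0 := by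
    by_contra hcon
    push_neg at hcon
    set i0 : Fin (n+4) := ⟨0, by omega⟩
    set i1 : Fin (n+4) := ⟨1, by omega⟩
    set i2 : Fin (n+4) := ⟨2, by omega⟩
    have h01 := hcon i0 i1 (by simp [i0, i1, Fin.ext_iff])
    have h02 := hcon i0 i2 (by simp [i0, i2, Fin.ext_iff])
    have h12 := hcon i1 i2 (by simp [i1, i2, Fin.ext_iff])
    exact hc i0 (by omega)
  have hpl : Fin.castSucc (Fin.last (n+2)) ≠ Fin.last (n+3) := by simp [Fin.ext_iff]
  set j' : Fin (n+4) := Equiv.swap (Fin.last (n+3)) i j with hj'def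
  have hj's : Equiv.swap (Fin.last (n+3)) i j' = j := Equiv.swap_apply_self _ _ _
  have hj'l : j' ≠ Fin.last (n+3) := by
    intro h
    apply hij
    rw [← hj's, h, Equiv.swap_apply_left]
  set π : Equiv.Perm (Fin (n+4)) :=
    (Equiv.swap (Fin.castSucc (Fin.last (n+2))) j').trans (Equiv.swap (Fin.last (n+3)) i)
    with hπdef
  have hπl : π (Fin.last (n+3)) = i := by
    rw [hπdef, Equiv.trans_apply, Equiv.swap_apply_of_ne_of_ne hpl.symm (Ne.symm hj'l),
      Equiv.swap_apply_left]
  have hπp : π (Fin.castSucc (Fin.last (n+2))) = j := by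
    rw [hπdef, Equiv.trans_apply, Equiv.swap_apply_left, hj's]
  set c1 : Fin (n+4) → ℤ := c ∘ ⇑π with hc1def
  have hc1 : ∀ i, c1 i ≠ 0 := fun i => hc _
  have hsum1 : ∑ i, c1 i = 0 := (Equiv.sum_comp π c).trans hsum
  set d : ℤ := c1 (Fin.castSucc (Fin.last (n+2))) + c1 (Fin.last (n+3)) with hddef
  have hd : d ≠ 0 := by
    rw [hddef, hc1def]
    simp only [Function.comp_apply, hπp, hπl]
    rw [add_comm]
    exact hd0
  set c' : Fin (n+3) → ℤ :=
    Fin.snoc (fun m : Fin (n+2) => c1 (Fin.castSucc (Fin.castSucc m))) d with hc'def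
  have hc'cs : ∀ m : Fin (n+2), c' (Fin.castSucc m) = c1 (Fin.castSucc (Fin.castSucc m)) := by
    intro m; rw [hc'def]; exact Fin.snoc_castSucc _ _ _
  have hc'l : c' (Fin.last (n+2)) = d := by rw [hc'def]; exact Fin.snoc_last _ _
  have hc' : ∀ i, c' i ≠ 0 := by
    intro i
    refine Fin.lastCases ?_ ?_ i
    · rw [hc'l]; exact hd
    · intro m; rw [hc'cs]; exact hc1 _
  have hsum' : ∑ i, c' i = 0 := by
    have e1 : ∑ i, c' i
        = (∑ m : Fin (n+2), c1 (Fin.castSucc (Fin.castSucc m))) + d := by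
      rw [Fin.sum_univ_castSucc, hc'l]
      congr 1
      exact Finset.sum_congr rfl fun m _ => hc'cs m
    have e2 : (0:ℤ) = (∑ m : Fin (n+2), c1 (Fin.castSucc (Fin.castSucc m)))
        + c1 (Fin.castSucc (Fin.last (n+2))) + c1 (Fin.last (n+3)) := by
      rw [← hsum1, Fin.sum_univ_castSucc, Fin.sum_univ_castSucc]
    rw [e1, hddef]
    omega
  obtain ⟨δ₁, hδ₁, H1⟩ := IH c' hc' hsum' (min ε 1) (lt_min hε one_pos)
  obtain ⟨δ₂, hδ₂, H2⟩ := core3 (σ := min (δ₁/2) 1) (lt_min (by positivity) one_pos)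
    (min_le_right _ _)
  set B : ℕ := 1 + ∑ i, (c i).natAbs with hBdef
  have hB1 : 1 ≤ B := by omega
  refine ⟨min (δ₂ * (δ₁ / 2)) ((B:ℝ)⁻¹ ^ (n+3)), by positivity, ?_⟩
  intro p hp A hA
  have hp0 : (0:ℝ) < p := by exact_mod_cast hp.out.pos
  have hAne : A.Nonempty := by
    rw [← Finset.card_pos]
    have : (0:ℝ) < #A := lt_of_lt_of_le (by positivity) hA
    exact_mod_cast this
  by_cases hbig : B < p
  swap
  · push_neg at hbig
    have h1 : 1 ≤ numSol c A := one_le_numSol hsum hAne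
    have hpB : (p:ℝ) ≤ B := by exact_mod_cast hbig
    have hBpos : (0:ℝ) < B := by exact_mod_cast hB1
    calc min (δ₂ * (δ₁ / 2)) ((B:ℝ)⁻¹ ^ (n+3)) * (p:ℝ)^(n+3)
        ≤ (B:ℝ)⁻¹ ^ (n+3) * (p:ℝ)^(n+3) :=
          mul_le_mul_of_nonneg_right (min_le_right _ _) (by positivity)
      _ = ((B:ℝ)⁻¹ * p) ^ (n+3) := by rw [mul_pow]
      _ ≤ 1 ^ (n+3) := by
          apply pow_le_pow_left₀ (by positivity)
          rw [inv_mul_le_iff₀ hBpos]; linarith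
      _ = 1 := one_pow _
      _ ≤ numSol c A := by exact_mod_cast h1
  have hcastkey : ∀ e : ℤ, e ≠ 0 → e.natAbs < B → ((e : ℤ) : ZMod p) ≠ 0 := by
    intro e he heB h
    rw [ZMod.intCast_zmod_eq_zero_iff_dvd] at h
    have h2 : p ∣ e.natAbs := Int.natCast_dvd_natCast.1 (Int.dvd_natAbs.2 h)
    have h3 := Nat.le_of_dvd (Int.natAbs_pos.2 he) h2
    omega
  have hbnd : ∀ i : Fin (n+4), (c i).natAbs < B := by
    intro i
    have h5 : (c i).natAbs ≤ ∑ i, (c i).natAbs := by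
      have := Finset.single_le_sum (f := fun i => (c i).natAbs) (fun _ _ => Nat.zero_le _)
        (mem_univ i)
      simpa using this
    omega
  have hdB : d.natAbs < B := by
    have h0 : d = c (π (Fin.castSucc (Fin.last (n+2)))) + c (π (Fin.last (n+3))) := by
      rw [hddef, hc1def]; rfl
    have h1 : d.natAbs ≤ (c (π (Fin.castSucc (Fin.last (n+2))))).natAbs
        + (c (π (Fin.last (n+3)))).natAbs := by
      rw [h0]; exact Int.natAbs_add_le _ _
    have hne : π (Fin.castSucc (Fin.last (n+2))) ≠ π (Fin.last (n+3)) :=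
      fun h => hpl (π.injective h)
    have h2 : (c (π (Fin.castSucc (Fin.last (n+2))))).natAbs
        + (c (π (Fin.last (n+3)))).natAbs ≤ ∑ i, (c i).natAbs := by
      have h3 := Finset.sum_le_sum_of_subset (f := fun x => (c x).natAbs)
        (Finset.subset_univ {π (Fin.castSucc (Fin.last (n+2))), π (Fin.last (n+3))})
      rwa [Finset.sum_pair hne] at h3
    omega
  have hcastc1 : ∀ i : Fin (n+4), ((c1 i : ℤ) : ZMod p) ≠ 0 :=
    fun i => hcastkey _ (hc1 i) (by rw [hc1def]; exact hbnd _)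
  have hcastd : ((d : ℤ) : ZMod p) ≠ 0 := hcastkey _ hd hdB
  set fib : ZMod p → Finset (Fin (n+3) → ZMod p) := fun z =>
    univ.filter fun y => ((∀ i, y i ∈ A) ∧ ∑ i, c' i • y i = 0) ∧ y (Fin.last (n+2)) = z
    with hfibdef
  have hsum_fib : ∑ z ∈ (univ : Finset (ZMod p)), #(fib z) = numSol c' A := by
    rw [numSol, Finset.card_eq_sum_card_fiberwise
      (f := fun y => y (Fin.last (n+2))) (t := univ) (fun x _ => mem_univ _)]
    exact Finset.sum_congr rfl fun z _ => by rw [hfibdef, Finset.filter_filter]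
  have hfib_le : ∀ z, #(fib z) ≤ p^(n+1) := by
    intro z
    have hle : #(fib z) ≤ #(univ : Finset (Fin (n+1) → ZMod p)) := by
      apply card_le_card_of_injOn (fun y => fun m : Fin (n+1) => y (Fin.succ (Fin.castSucc m)))
        (fun _ _ => mem_univ _)
      intro y hy y' hy' hmid
      rw [mem_coe, hfibdef, mem_filter] at hy hy'
      have htail : ∀ m : Fin (n+2), y (Fin.succ m) = y' (Fin.succ m) := by
        intro m
        refine Fin.lastCases ?_ ?_ m
        · rw [Fin.succ_last, hy.2.2, hy'.2.2]
        · intro m'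
          exact congrFun hmid m'
      have hc'0 : ((c' 0 : ℤ) : ZMod p) ≠ 0 := by
        have h0 : (0 : Fin (n+3)) = Fin.castSucc (Fin.castSucc (0 : Fin (n+1))) := by
          simp
        rw [h0, hc'cs]
        exact hcastc1 _
      have e1 := hy.2.1.2
      have e2 := hy'.2.1.2
      rw [Fin.sum_univ_succ] at e1 e2
      have e3 : ∑ m : Fin (n+2), c' m.succ • y m.succ = ∑ m : Fin (n+2), c' m.succ • y' m.succ :=
        Finset.sum_congr rfl fun m _ => by rw [htail m]
      have e4 : c' 0 • y 0 = c' 0 • y' 0 := by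
        have e5 : c' 0 • y 0 + ∑ m : Fin (n+2), c' m.succ • y m.succ
            = c' 0 • y' 0 + ∑ m : Fin (n+2), c' m.succ • y m.succ := by
          rw [e1, e3, e2]
        exact add_right_cancel e5
      rw [zsmul_eq_mul, zsmul_eq_mul] at e4
      have hz0 : y 0 = y' 0 := mul_left_cancel₀ hc'0 e4
      funext i2
      refine Fin.cases ?_ ?_ i2
      · exact hz0
      · intro m; exact htail m
    calc #(fib z) ≤ #(univ : Finset (Fin (n+1) → ZMod p)) := hle
      _ = p^(n+1) := by rw [card_univ]; simp [ZMod.card]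
  set S : Finset (ZMod p) := A.filter (fun z => (δ₁/2) * (p:ℝ)^(n+1) ≤ #(fib z)) with hSdef
  have hSsubA : S ⊆ A := Finset.filter_subset _ _
  have hfibS : ∀ z ∈ S, (δ₁/2) * (p:ℝ)^(n+1) ≤ #(fib z) := fun z hz =>
    (Finset.mem_filter.1 hz).2
  have hfib_notS : ∀ z, z ∉ S → (#(fib z) : ℝ) ≤ (δ₁/2) * (p:ℝ)^(n+1) := by
    intro z hz
    by_cases hzA : z ∈ A
    · exact le_of_lt (not_le.mp fun h => hz (mem_filter.2 ⟨hzA, h⟩))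
    · have hemp : fib z = ∅ := by
        apply Finset.eq_empty_of_forall_notMem
        intro y hy
        rw [hfibdef, mem_filter] at hy
        exact hzA (hy.2.2 ▸ hy.2.1.1 (Fin.last (n+2)))
      rw [hemp]
      simp only [Finset.card_empty, Nat.cast_zero]
      positivity
  have hScard : (δ₁/2) * p ≤ #S := by
    have hnum : δ₁ * (p:ℝ)^(n+2) ≤ numSol c' A :=
      H1 p A (le_trans (mul_le_mul_of_nonneg_right (min_le_left _ _) hp0.le) hA)
    have hsplit : (numSol c' A : ℝ) = ∑ z ∈ (univ : Finset (ZMod p)), (#(fib z) : ℝ) := by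
      rw [← hsum_fib]; push_cast; rfl
    have hU : ∑ z ∈ (univ : Finset (ZMod p)) \ S, (#(fib z):ℝ) + ∑ z ∈ S, (#(fib z):ℝ)
        = ∑ z ∈ (univ : Finset (ZMod p)), (#(fib z):ℝ) :=
      Finset.sum_sdiff (Finset.subset_univ S)
    have hbound1 : ∑ z ∈ S, (#(fib z):ℝ) ≤ (#S : ℝ) * (p:ℝ)^(n+1) := by
      calc ∑ z ∈ S, (#(fib z):ℝ) ≤ ∑ _z ∈ S, ((p:ℝ)^(n+1)) :=
            Finset.sum_le_sum fun z _ => by exact_mod_cast hfib_le z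
        _ = (#S : ℝ) * (p:ℝ)^(n+1) := by rw [Finset.sum_const, nsmul_eq_mul]
    have hbound2 : ∑ z ∈ (univ : Finset (ZMod p)) \ S, (#(fib z):ℝ)
        ≤ (p:ℝ) * ((δ₁/2) * (p:ℝ)^(n+1)) := by
      calc ∑ z ∈ (univ : Finset (ZMod p)) \ S, (#(fib z):ℝ)
          ≤ ∑ _z ∈ (univ : Finset (ZMod p)) \ S, ((δ₁/2) * (p:ℝ)^(n+1)) :=
            Finset.sum_le_sum fun z hz => hfib_notS z (Finset.mem_sdiff.1 hz).2
        _ = (#((univ : Finset (ZMod p)) \ S) : ℝ) * ((δ₁/2) * (p:ℝ)^(n+1)) := by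
            rw [Finset.sum_const, nsmul_eq_mul]
        _ ≤ (p:ℝ) * ((δ₁/2) * (p:ℝ)^(n+1)) := by
            apply mul_le_mul_of_nonneg_right _ (by positivity)
            have hcard : #((univ : Finset (ZMod p)) \ S) ≤ p := by
              calc #((univ : Finset (ZMod p)) \ S) ≤ #(univ : Finset (ZMod p)) :=
                    card_le_card Finset.sdiff_subset
                _ = p := by rw [card_univ]; exact ZMod.card p
            exact_mod_cast hcard
    have hcomb : δ₁ * (p:ℝ)^(n+2) ≤ (#S : ℝ) * (p:ℝ)^(n+1) + (p:ℝ) * ((δ₁/2) * (p:ℝ)^(n+1)) := by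
      rw [hsplit] at hnum
      linarith
    rw [pow_succ] at hcomb
    have hppow : (0:ℝ) < (p:ℝ)^(n+1) := by positivity
    have h2 : ((δ₁/2) * p) * (p:ℝ)^(n+1) ≤ (#S : ℝ) * (p:ℝ)^(n+1) := by nlinarith
    exact le_of_mul_le_mul_right h2 hppow
  have hγ : (((-d : ℤ)) : ZMod p) ≠ 0 := by
    push_cast
    exact neg_ne_zero.2 hcastd
  have hsumαβγ : ((c1 (Fin.castSucc (Fin.last (n+2))) : ℤ) : ZMod p)
      + ((c1 (Fin.last (n+3)) : ℤ) : ZMod p) + (((-d : ℤ)) : ZMod p) = 0 := by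
    rw [hddef]
    push_cast
    ring
  have hT := H2 p ((c1 (Fin.castSucc (Fin.last (n+2))) : ℤ) : ZMod p)
    ((c1 (Fin.last (n+3)) : ℤ) : ZMod p) (((-d : ℤ)) : ZMod p)
    (hcastc1 _) (hcastc1 _) hγ hsumαβγ A S hSsubA
    (le_trans (mul_le_mul_of_nonneg_right (min_le_left _ _) hp0.le) hScard)
  set Tf := T ((c1 (Fin.castSucc (Fin.last (n+2))) : ℤ) : ZMod p)
    ((c1 (Fin.last (n+3)) : ℤ) : ZMod p) (((-d : ℤ)) : ZMod p) A S with hTfdef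
  set D := Tf.sigma (fun t => fib t.2.2) with hDdef
  have hDcard : #D = ∑ t ∈ Tf, #(fib t.2.2) := Finset.card_sigma _ _
  have hDlow : (δ₂ * (p:ℝ)^2) * ((δ₁/2) * (p:ℝ)^(n+1)) ≤ (#D : ℝ) := by
    have h1 : ∀ t ∈ Tf, (δ₁/2) * (p:ℝ)^(n+1) ≤ (#(fib t.2.2) : ℝ) := by
      intro t ht
      have htS : t.2.2 ∈ S := by
        rw [hTfdef, T, mem_filter] at ht
        exact ht.2.2.2.1
      exact hfibS _ htS
    calc (δ₂ * (p:ℝ)^2) * ((δ₁/2) * (p:ℝ)^(n+1))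
        ≤ (#Tf : ℝ) * ((δ₁/2) * (p:ℝ)^(n+1)) :=
          mul_le_mul_of_nonneg_right hT (by positivity)
      _ ≤ ∑ t ∈ Tf, (#(fib t.2.2) : ℝ) := by
          have := Finset.card_nsmul_le_sum Tf (fun t => (#(fib t.2.2) : ℝ))
            ((δ₁/2) * (p:ℝ)^(n+1)) h1
          rwa [nsmul_eq_mul] at this
      _ = (#D : ℝ) := by rw [hDcard]; push_cast; rfl
  have hDup : #D ≤ numSol c1 A := by
    apply card_le_card_of_injOn (fun q => Fin.snoc (Fin.snoc (Fin.init q.2) q.1.1) q.1.2.1)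
    · intro q hq
      rw [hDdef, mem_coe, Finset.mem_sigma] at hq
      obtain ⟨hqT, hqf⟩ := hq
      rw [hTfdef, T, mem_filter] at hqT
      obtain ⟨-, hu, hv, hw, heq⟩ := hqT
      rw [hfibdef, mem_filter] at hqf
      obtain ⟨-, ⟨hyA, hyeq⟩, hylast⟩ := hqf
      simp only [mem_coe]
      refine mem_filter.2 ⟨mem_univ _, ?_, ?_⟩
      · intro i2
        refine Fin.lastCases ?_ ?_ i2
        · rw [Fin.snoc_last]; exact hv
        · intro m
          rw [Fin.snoc_castSucc]
          refine Fin.lastCases ?_ ?_ m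
          · rw [Fin.snoc_last]; exact hu
          · intro m'
            rw [Fin.snoc_castSucc]
            exact hyA _
      · rw [Fin.sum_univ_castSucc, Fin.sum_univ_castSucc]
        simp only [Fin.snoc_castSucc, Fin.snoc_last, Fin.init]
        rw [Fin.sum_univ_castSucc] at hyeq
        rw [hc'l, hylast] at hyeq
        have hsc : ∑ m : Fin (n+2), c' (Fin.castSucc m) • q.2 (Fin.castSucc m)
            = ∑ m : Fin (n+2), c1 (Fin.castSucc (Fin.castSucc m)) • q.2 (Fin.castSucc m) :=
          Finset.sum_congr rfl fun m _ => by rw [hc'cs]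
        rw [hsc] at hyeq
        simp only [zsmul_eq_mul] at hyeq ⊢
        push_cast at heq
        linear_combination hyeq + heq
    · intro q hq q' hq' hQ
      rw [mem_coe, hDdef, Finset.mem_sigma] at hq hq'
      obtain ⟨hqT, hqf⟩ := hq
      obtain ⟨hqT', hqf'⟩ := hq'
      rw [hTfdef, T, mem_filter] at hqT hqT'
      rw [hfibdef, mem_filter] at hqf hqf'
      have hv : q.1.2.1 = q'.1.2.1 := by
        have := congrFun hQ (Fin.last (n+3))
        simpa [Fin.snoc_last] using this
      have hu : q.1.1 = q'.1.1 := by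
        have := congrFun hQ (Fin.castSucc (Fin.last (n+2)))
        simpa [Fin.snoc_castSucc, Fin.snoc_last] using this
      have hmid : ∀ m : Fin (n+2), q.2 (Fin.castSucc m) = q'.2 (Fin.castSucc m) := by
        intro m
        have := congrFun hQ (Fin.castSucc (Fin.castSucc m))
        simpa [Fin.snoc_castSucc, Fin.init] using this
      have hw : q.1.2.2 = q'.1.2.2 := by
        have e1 := hqT.2.2.2.2
        have e2 := hqT'.2.2.2.2
        rw [← hu, ← hv] at e2
        have e3 : (((-d : ℤ)) : ZMod p) * q.1.2.2 = (((-d : ℤ)) : ZMod p) * q'.1.2.2 := by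
          linear_combination e1 - e2
        exact mul_left_cancel₀ hγ e3
      have hy : q.2 = q'.2 := by
        funext i2
        refine Fin.lastCases ?_ ?_ i2
        · rw [hqf.2.2, hqf'.2.2, hw]
        · intro m; exact hmid m
      have hfst : q.1 = q'.1 := Prod.ext hu (Prod.ext hv hw)
      exact Sigma.ext hfst (heq_of_eq hy)
  have hperm : numSol c1 A = numSol c A := by
    rw [hc1def]
    exact numSol_comp_perm c π A
  calc min (δ₂ * (δ₁ / 2)) ((B:ℝ)⁻¹ ^ (n+3)) * (p:ℝ)^(n+3)
      ≤ (δ₂ * (δ₁ / 2)) * (p:ℝ)^(n+3) :=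
        mul_le_mul_of_nonneg_right (min_le_left _ _) (by positivity)
    _ = (δ₂ * (p:ℝ)^2) * ((δ₁/2) * (p:ℝ)^(n+1)) := by ring
    _ ≤ (#D : ℝ) := hDlow
    _ ≤ (numSol c1 A : ℝ) := by exact_mod_cast hDup
    _ = numSol c A := by rw [hperm]

end NumSol

end St9

theorem statement9 {k : ℕ} (hk : 3 ≤ k) (c : Fin k → ℤ) (hc : ∀ i, c i ≠ 0)
    (hsum : ∑ i, c i = 0) :
    ∀ ε : ℝ, 0 < ε → ∃ δ : ℝ, 0 < δ ∧ ∀ p : ℕ, p.Prime → ∀ A : Finset (ZMod p),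
      ε * p ≤ (A.card : ℝ) →
      δ * (p : ℝ) ^ (k - 1) ≤
        (Nat.card {x : Fin k → ZMod p // (∀ i, x i ∈ A) ∧ ∑ i, c i • x i = 0} : ℝ) := by
  intro ε hε
  obtain ⟨m, rfl⟩ : ∃ m, k = m + 3 := ⟨k - 3, by omega⟩
  have main : ∀ (m : ℕ) (c : Fin (m+3) → ℤ), (∀ i, c i ≠ 0) → ∑ i, c i = 0 →
      ∀ ε : ℝ, 0 < ε → ∃ δ : ℝ, 0 < δ ∧ ∀ (p : ℕ) [Fact p.Prime], ∀ A : Finset (ZMod p),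
        ε * p ≤ A.card → δ * (p:ℝ) ^ (m+2) ≤ St9.numSol c A := by
    intro m
    induction m with
    | zero => intro c hc hsum ε hε; exact St9.base3 c hc hsum hε
    | succ n IHn => intro c hc hsum ε hε; exact St9.step n IHn c hc hsum ε hε
  obtain ⟨δ, hδ, H⟩ := main m c hc hsum ε hε
  refine ⟨δ, hδ, ?_⟩
  intro p hp A hA
  haveI : Fact p.Prime := ⟨hp⟩
  have h1 := H p A hA
  have h2 : Nat.card {x : Fin (m+3) → ZMod p // (∀ i, x i ∈ A) ∧ ∑ i, c i • x i = 0}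
      = St9.numSol c A := by
    rw [Nat.card_eq_fintype_card, Fintype.card_subtype]
    rfl
  rw [h2]
  have h3 : m + 3 - 1 = m + 2 := rfl
  rw [h3]
  exact h1
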